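/- Let a_{11}, a_{12}, a_{21}, a_{22}, a_{31}, a_{32}, a_{41}, a_{42}, c_1, c_2, c_3, c_4 be real numbers with a_{11}·a_{41}·a_{32}·a_{22} − a_{31}·a_{12}·a_{21}·a_{42} ≠ 0, and define v_1 = (a_{31}·a_{41}·a_{21}·c_4 − a_{31}·a_{41}·a_{22}·c_3 − a_{31}·a_{21}·a_{42}·c_2 + a_{41}·a_{32}·a_{22}·c_1)/(a_{11}·a_{41}·a_{32}·a_{22} − a_{31}·a_{12}·a_{21}·a_{42}), v_2 = (a_{11}·a_{41}·a_{32}·c_4 − a_{11}·a_{32}·a_{42}·c_2 − a_{31}·a_{12}·a_{42}·c_3 + a_{12}·a_{32}·a_{42}·c_1)/(a_{11}·a_{41}·a_{32}·a_{22} − a_{31}·a_{12}·a_{21}·a_{42}), v_3 = (−a_{11}·a_{41}·a_{21}·c_4 + a_{11}·a_{41}·a_{22}·c_3 + a_{11}·a_{21}·a_{42}·c_2 − a_{12}·a_{21}·a_{42}·c_1)/(a_{11}·a_{41}·a_{32}·a_{22} − a_{31}·a_{12}·a_{21}·a_{42}). If any of the following holds: (i) v_2·a_{21} = 0 and v_3·a_{32}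 = 0; (ii) v_1·a_{11} = 0 and v_3·a_{31} = 0; (iii) v_1·a_{11} = v_2·a_{21} = 0 and v_3·a_{31}·a_{32} = 0; (iv) v_1·a_{11} = v_2·a_{21} = 0, a_{31}·a_{32}·v_3 ≠ 0, and a_{31}·a_{32} < 0 — then there exist real numbers x_1, x_3 ≥ 0 with x_1 + x_3 = 1 satisfying v_1·a_{11}·x_1 = 0, v_2·a_{21}·x_3 = 0, and v_3·a_{31}·x_1 + v_3·a_{32}·x_3 = 0. -/
import Mathlib

theorem stmt17 (a11 a12 a21 a22 a31 a32 a41 a42 c1 c2 c3 c4 : ℝ)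
    (hdet : a11 * a41 * a32 * a22 - a31 * a12 * a21 * a42 ≠ 0)
    (v1 v2 v3 : ℝ)
    (hv1 : v1 = (a31 * a41 * a21 * c4 - a31 * a41 * a22 * c3
        - a31 * a21 * a42 * c2 + a41 * a32 * a22 * c1)
      / (a11 * a41 * a32 * a22 - a31 * a12 * a21 * a42))
    (hv2 : v2 = (a11 * a41 * a32 * c4 - a11 * a32 * a42 * c2
        - a31 * a12 * a42 * c3 + a12 * a32 * a42 * c1)
      / (a11 * a41 * a32 * a22 - a31 * a12 * a21 * a42))
    (hv3 : v3 = (-(a11 * a41 * a21 * c4) + a11 * a41 * a22 * c3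
        + a11 * a21 * a42 * c2 - a12 * a21 * a42 * c1)
      / (a11 * a41 * a32 * a22 - a31 * a12 * a21 * a42))
    (hcase : (v2 * a21 = 0 ∧ v3 * a32 = 0)
      ∨ (v1 * a11 = 0 ∧ v3 * a31 = 0)
      ∨ (v1 * a11 = 0 ∧ v2 * a21 = 0 ∧ v3 * a31 * a32 = 0)
      ∨ (v1 * a11 = 0 ∧ v2 * a21 = 0 ∧ a31 * a32 * v3 ≠ 0 ∧ a31 * a32 < 0)) :
    ∃ x1 x3 : ℝ, 0 ≤ x1 ∧ 0 ≤ x3 ∧ x1 + x3 = 1 ∧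
      v1 * a11 * x1 = 0 ∧ v2 * a21 * x3 = 0 ∧
        v3 * a31 * x1 + v3 * a32 * x3 = 0 := by
  rcases hcase with ⟨h2, h3⟩ | ⟨h1, h3⟩ | ⟨h1, h2, h3⟩ | ⟨h1, h2, hne, hlt⟩
  · exact ⟨0, 1, le_refl _, zero_le_one, by ring, by ring, by simpa using h2,
      by rw [mul_zero, mul_one, zero_add]; exact h3⟩
  · exact ⟨1, 0, zero_le_one, le_refl _, by ring, by simpa using h1,
      by ring, by rw [mul_one, mul_zero, add_zero]; exact h3⟩
  · rcases mul_eq_zero.mp h3 with h31 | h32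
    · exact ⟨1, 0, zero_le_one, le_refl _, by ring, by simpa using h1,
        by ring, by rw [mul_one, mul_zero, add_zero]; exact h31⟩
    · exact ⟨0, 1, le_refl _, zero_le_one, by ring, by ring, by simpa using h2,
        by rw [mul_zero, mul_one, zero_add, h32, mul_zero]⟩
  · have hsub : a32 - a31 ≠ 0 := by
      intro h
      have : a31 = a32 := by linarith
      rw [this] at hlt; nlinarith [sq_nonneg a32]
    have hsub' : a31 - a32 ≠ 0 := fun h => hsub (by linarith)
    refine ⟨a32 / (a32 - a31), a31 / (a31 - a32), ?_, ?_, ?_, ?_, ?_, ?_⟩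
    · rcases lt_or_ge a32 0 with h | h
      · have h31 : 0 < a31 := by nlinarith
        rw [div_nonneg_iff]; right; constructor <;> linarith
      · have h32 : 0 < a32 := lt_of_le_of_ne h (by rintro rfl; simp at hlt)
        have h31 : a31 < 0 := by nlinarith
        have : 0 < a32 - a31 := by linarith
        positivity
    · rcases lt_or_ge a31 0 with h | h
      · have h32 : 0 < a32 := by nlinarith
        have : a31 - a32 < 0 := by linarith
        rw [div_nonneg_iff]; right; constructor <;> linarith
      · have h31 : 0 < a31 := lt_of_le_of_ne h (by rintro rfl; simp at hlt)
        have h32 : a32 < 0 := by nlinarith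
        have : 0 < a31 - a32 := by linarith
        positivity
    · rw [div_add_div _ _ hsub hsub', div_eq_one_iff_eq (by
        intro h; apply hsub; nlinarith [sq_nonneg (a32-a31)])]
      ring
    · rw [h1, zero_mul]
    · rw [h2, zero_mul]
    · field_simp
      ring
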